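/- For every n ≥ 1 there exists an order-n grid enumeration φ such that any two consecutive cells φ(j), φ(j+1) are edge-adjacent and, in addition, the last cell φ(4^n − 1) is edge-adjacent to the first cell φ(0); that is, the 2^n × 2^n grid admits a closed edge-adjacent enumeration (the order-n approximation of the Moore curve is such a closed curve). -/
import Mathlib


/-- An order-`n` grid enumeration: a bijection between `Fin (4^n)` and the cells of the
`2^n × 2^n` grid; cell `(a,b)` represents the subsquare with lower-left corner
`(a/2^n, b/2^n)`. -/
abbrev GridEnum (n : ℕ) := Fin (4 ^ n) ≃ Fin (2 ^ n) × Fin (2 ^ n)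

/-- Two grid cells are edge-adjacent if their coordinates (as integers) satisfy
`|a − a'| + |b − b'| = 1`. -/
def edgeAdj {m : ℕ} (c d : Fin m × Fin m) : Prop :=
  |((c.1 : ℕ) : ℤ) - ((d.1 : ℕ) : ℤ)| + |((c.2 : ℕ) : ℤ) - ((d.2 : ℕ) : ℤ)| = 1

/-- Two grid cells are king-adjacent if their coordinates (as integers) satisfy
`max (|a − a'|) (|b − b'|) = 1`. -/
def kingAdj {m : ℕ} (c d : Fin m × Fin m) : Prop :=
  max |((c.1 : ℕ) : ℤ) - ((d.1 : ℕ) : ℤ)| |((c.2 : ℕ) : ℤ) - ((d.2 : ℕ) : ℤ)| = 1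

/-- Adjacency condition: any two consecutive cells of the enumeration are edge-adjacent. -/
def ConsecEdgeAdj {n : ℕ} (φ : GridEnum n) : Prop :=
  ∀ (j : ℕ) (h : j + 1 < 4 ^ n), edgeAdj (φ ⟨j, Nat.lt_of_succ_lt h⟩) (φ ⟨j + 1, h⟩)

/-- Any two consecutive cells of the enumeration are king-adjacent. -/
def ConsecKingAdj {n : ℕ} (φ : GridEnum n) : Prop :=
  ∀ (j : ℕ) (h : j + 1 < 4 ^ n), kingAdj (φ ⟨j, Nat.lt_of_succ_lt h⟩) (φ ⟨j + 1, h⟩)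

/-- Endpoint condition: the enumeration starts at the lower-left cell `(0,0)` and ends
at the lower-right cell `(2^n − 1, 0)`. -/
def EndpointCond {n : ℕ} (φ : GridEnum n) : Prop :=
  φ ⟨0, by positivity⟩ = (⟨0, by positivity⟩, ⟨0, by positivity⟩) ∧
  φ ⟨4 ^ n - 1, Nat.sub_lt (by positivity) Nat.one_pos⟩ =
    (⟨2 ^ n - 1, Nat.sub_lt (by positivity) Nat.one_pos⟩, ⟨0, by positivity⟩)

/-- Nesting condition: integer division of both coordinates of `φₙ₊₁ j` by 2 yields
`φₙ ⌊j/4⌋`. -/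
def Nests {n : ℕ} (φn : GridEnum n) (φn1 : GridEnum (n + 1)) : Prop :=
  ∀ j : Fin (4 ^ (n + 1)),
    ((φn1 j).1 : ℕ) / 2 =
      ((φn ⟨(j : ℕ) / 4, by
        have hj : (j : ℕ) < 4 ^ n * 4 := by simpa [pow_succ] using j.isLt
        omega⟩).1 : ℕ) ∧
    ((φn1 j).2 : ℕ) / 2 =
      ((φn ⟨(j : ℕ) / 4, by
        have hj : (j : ℕ) < 4 ^ n * 4 := by simpa [pow_succ] using j.isLt
        omega⟩).2 : ℕ)

namespace MooreAux

/-- x-coordinate of the `j`-th cell of a boustrophedon Hamiltonian cycle on the `m × m` grid. -/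
def fx (m j : ℕ) : ℕ :=
  if j = 0 then 0
  else if j ≤ m * (m - 1) then (j - 1) / (m - 1)
  else m - (j - m * (m - 1))

/-- y-coordinate of the `j`-th cell. -/
def fy (m j : ℕ) : ℕ :=
  if j = 0 then 0
  else if j ≤ m * (m - 1) then
    if (j - 1) / (m - 1) % 2 = 0 then 1 + (j - 1) % (m - 1) else m - 1 - (j - 1) % (m - 1)
  else 0

/-- Inverse map: the index of the cell `(x, y)`. -/
def gg (m x y : ℕ) : ℕ :=
  if y = 0 then (if x = 0 then 0 else m * (m - 1) + (m - x))
  else (m - 1) * x + (if x % 2 = 0 then y - 1 else m - 1 - y) + 1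

lemma sq_split (m : ℕ) : m * (m - 1) + m = m * m := by
  cases m with
  | zero => simp
  | succ k => simp [Nat.succ_sub_one]; ring

lemma sq_split' (m : ℕ) : (m - 1) * (m - 1) + (m - 1) = m * (m - 1) := by
  cases m with
  | zero => simp
  | succ k => simp [Nat.succ_sub_one]; ring

lemma divmod (q x s : ℕ) (hq : 0 < q) (hs : s < q) :
    (q * x + s) / q = x ∧ (q * x + s) % q = s := by
  constructor
  · rw [Nat.mul_add_div hq, Nat.div_eq_of_lt hs, Nat.add_zero]
  · rw [Nat.mul_add_mod, Nat.mod_eq_of_lt hs]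

lemma fx_lt {m j : ℕ} (hm : 2 ≤ m) (hj : j < m * m) : fx m j < m := by
  have hs := sq_split m
  unfold fx
  split_ifs with h0 h1
  · omega
  · rw [Nat.div_lt_iff_lt_mul (by omega : 0 < m - 1)]
    omega
  · omega

lemma fy_lt {m j : ℕ} (hm : 2 ≤ m) (hj : j < m * m) : fy m j < m := by
  have hr : (j - 1) % (m - 1) < m - 1 := Nat.mod_lt _ (by omega)
  unfold fy
  split_ifs <;> omega

lemma left_inv {m j : ℕ} (hm : 2 ≤ m) (hj : j < m * m) : gg m (fx m j) (fy m j) = j := by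
  have hs := sq_split m
  by_cases h0 : j = 0
  · subst h0; simp [fx, fy, gg]
  by_cases h1 : j ≤ m * (m - 1)
  · have hd := Nat.div_add_mod (j - 1) (m - 1)
    have hr : (j - 1) % (m - 1) < m - 1 := Nat.mod_lt _ (by omega)
    simp only [fx, fy, gg, if_neg h0, if_pos h1]
    split_ifs <;> omega
  · simp only [fx, fy, gg, if_neg h0, if_neg h1, if_pos rfl]
    split_ifs <;> omega

lemma step_adj {m j : ℕ} (hm : 2 ≤ m) (he : m % 2 = 0) (hj : j + 1 < m * m) :
    (fx m j = fx m (j + 1) ∧ (fy m j + 1 = fy m (j + 1) ∨ fy m (j + 1) + 1 = fy m j)) ∨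
    (fy m j = fy m (j + 1) ∧ (fx m j + 1 = fx m (j + 1) ∨ fx m (j + 1) + 1 = fx m j)) := by
  have hs := sq_split m
  have hs' := sq_split' m
  by_cases h0 : j = 0
  · subst h0
    have h1 : (1 : ℕ) ≤ m * (m - 1) := by
      have : 1 * 1 ≤ m * (m - 1) := Nat.mul_le_mul (by omega) (by omega)
      omega
    left
    simp [fx, fy, Nat.zero_div, Nat.zero_mod, h1]
  by_cases h1 : j + 1 ≤ m * (m - 1)
  · -- both j and j+1 in the snake part
    obtain ⟨x, r, hd, hr, hx, hrr⟩ :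
        ∃ x r, (m - 1) * x + r = j - 1 ∧ r < m - 1 ∧
          (j - 1) / (m - 1) = x ∧ (j - 1) % (m - 1) = r :=
      ⟨_, _, Nat.div_add_mod _ _, Nat.mod_lt _ (by omega), rfl, rfl⟩
    by_cases hc : r + 1 < m - 1
    · -- same column
      have hdm := divmod (m - 1) x (r + 1) (by omega) hc
      have hdiv : (j + 1 - 1) / (m - 1) = x := by
        rw [show j + 1 - 1 = (m - 1) * x + (r + 1) by omega]; exact hdm.1
      have hmod : (j + 1 - 1) % (m - 1) = r + 1 := by
        rw [show j + 1 - 1 = (m - 1) * x + (r + 1) by omega]; exact hdm.2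
      simp only [fx, fy, if_neg h0, if_pos (by omega : j ≤ m * (m - 1)),
        if_neg (by omega : ¬ j + 1 = 0), if_pos h1, hdiv, hmod, hx, hrr]
      left
      split_ifs <;> refine ⟨?_, ?_⟩ <;> first | trivial | (left; trivial) | omega
    · -- column change: r = m - 2
      have hmul : (m - 1) * (x + 1) = (m - 1) * x + (m - 1) := by ring
      have hdm := divmod (m - 1) (x + 1) 0 (by omega) (by omega)
      have hdiv : (j + 1 - 1) / (m - 1) = x + 1 := by
        rw [show j + 1 - 1 = (m - 1) * (x + 1) + 0 by omega]; exact hdm.1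
      have hmod : (j + 1 - 1) % (m - 1) = 0 := by
        rw [show j + 1 - 1 = (m - 1) * (x + 1) + 0 by omega]; exact hdm.2
      simp only [fx, fy, if_neg h0, if_pos (by omega : j ≤ m * (m - 1)),
        if_neg (by omega : ¬ j + 1 = 0), if_pos h1, hdiv, hmod, hx, hrr]
      right
      split_ifs <;> refine ⟨?_, ?_⟩ <;> first | trivial | (left; trivial) | omega
  by_cases h2 : j ≤ m * (m - 1)
  · -- j = m*(m-1), j+1 enters the tail
    have hje : j = m * (m - 1) := by omega
    have hk : j - 1 = (m - 1) * (m - 1) + (m - 2) := by omega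
    have hdm := divmod (m - 1) (m - 1) (m - 2) (by omega) (by omega)
    have hdiv : (j - 1) / (m - 1) = m - 1 := by rw [hk]; exact hdm.1
    have hmod : (j - 1) % (m - 1) = m - 2 := by rw [hk]; exact hdm.2
    simp only [fx, fy, if_neg h0, if_pos h2, if_neg (by omega : ¬ j + 1 = 0), if_neg h1,
      hdiv, hmod]
    left
    split_ifs <;> refine ⟨?_, ?_⟩ <;> first | trivial | (left; trivial) | omega
  · -- both in the tail
    simp only [fx, fy, if_neg h0, if_neg h2, if_neg (by omega : ¬ j + 1 = 0), if_neg h1]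
    refine Or.inr ⟨by trivial, by omega⟩

lemma last_cell {m : ℕ} (hm : 2 ≤ m) : fx m (m * m - 1) = 1 ∧ fy m (m * m - 1) = 0 := by
  have hs := sq_split m
  obtain ⟨Q, hQ⟩ : ∃ Q, m * m = Q := ⟨_, rfl⟩
  rw [hQ] at hs ⊢
  have h0 : ¬ Q - 1 = 0 := by omega
  have h1 : ¬ Q - 1 ≤ m * (m - 1) := by omega
  simp only [fx, fy, if_neg h0, if_neg h1]
  exact ⟨by omega, by trivial⟩

lemma first_cell (m : ℕ) : fx m 0 = 0 ∧ fy m 0 = 0 := by simp [fx, fy]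

/-- Conversion to the integer/absolute-value form of edge adjacency. -/
lemma edge_of (a b c d : ℕ)
    (h : (a = c ∧ (b + 1 = d ∨ d + 1 = b)) ∨ (b = d ∧ (a + 1 = c ∨ c + 1 = a))) :
    |((a : ℕ) : ℤ) - ((c : ℕ) : ℤ)| + |((b : ℕ) : ℤ) - ((d : ℕ) : ℤ)| = 1 := by
  rcases abs_cases ((a : ℤ) - (c : ℤ)) with ⟨h1, _⟩ | ⟨h1, _⟩ <;>
    rcases abs_cases ((b : ℤ) - (d : ℤ)) with ⟨h2, _⟩ | ⟨h2, _⟩ <;>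
      rw [h1, h2] <;> omega

/-- The boustrophedon map `Fin (m*m) → Fin m × Fin m`. -/
def Fmap (m : ℕ) (hm : 2 ≤ m) (j : Fin (m * m)) : Fin m × Fin m :=
  (⟨fx m j, fx_lt hm j.isLt⟩, ⟨fy m j, fy_lt hm j.isLt⟩)

lemma Fmap_injective (m : ℕ) (hm : 2 ≤ m) : Function.Injective (Fmap m hm) := by
  intro a b h
  have h1 : fx m a = fx m b := congrArg (fun p => (p.1 : Fin m).val) h
  have h2 : fy m a = fy m b := congrArg (fun p => (p.2 : Fin m).val) h
  exact Fin.ext (by rw [← left_inv hm a.isLt, ← left_inv hm b.isLt, h1, h2])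

lemma Fmap_bijective (m : ℕ) (hm : 2 ≤ m) : Function.Bijective (Fmap m hm) :=
  (Fintype.bijective_iff_injective_and_card _).mpr ⟨Fmap_injective m hm, by simp⟩

end MooreAux

/-- For every `n ≥ 1` the `2^n × 2^n` grid admits a closed edge-adjacent enumeration:
consecutive cells are edge-adjacent and the last cell is edge-adjacent to the first
(the order-`n` approximation of the Moore curve is such a closed curve). -/
theorem exists_closed_grid_enumeration (n : ℕ) (hn : 1 ≤ n) :
    ∃ φ : GridEnum n, ConsecEdgeAdj φ ∧
      edgeAdj (φ ⟨4 ^ n - 1, Nat.sub_lt (by positivity) Nat.one_pos⟩)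
        (φ ⟨0, by positivity⟩) := by
  have hm : 2 ≤ 2 ^ n := by
    calc (2 : ℕ) = 2 ^ 1 := by norm_num
    _ ≤ 2 ^ n := Nat.pow_le_pow_right (by norm_num) hn
  have he : 2 ^ n % 2 = 0 := by
    have h2 : (2 : ℕ) ∣ 2 ^ n := dvd_pow_self 2 (by omega)
    omega
  have hcard : 4 ^ n = 2 ^ n * 2 ^ n := by
    rw [show (4 : ℕ) = 2 * 2 by norm_num, mul_pow]
  refine ⟨(finCongr hcard).trans
      (Equiv.ofBijective _ (MooreAux.Fmap_bijective (2 ^ n) hm)), ?_, ?_⟩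
  · intro j h
    have hj : j + 1 < 2 ^ n * 2 ^ n := by omega
    exact MooreAux.edge_of _ _ _ _ (MooreAux.step_adj hm he hj)
  · have h1 := MooreAux.last_cell (m := 2 ^ n) hm
    have h0 := MooreAux.first_cell (2 ^ n)
    refine MooreAux.edge_of (MooreAux.fx (2 ^ n) (4 ^ n - 1)) (MooreAux.fy (2 ^ n) (4 ^ n - 1))
      (MooreAux.fx (2 ^ n) 0) (MooreAux.fy (2 ^ n) 0) ?_
    rw [show (4 : ℕ) ^ n - 1 = 2 ^ n * 2 ^ n - 1 by omega]
    exact Or.inr ⟨by omega, Or.inr (by omega)⟩
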